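/- arXiv:0902.4744 — 3 statements merged into one kernel-verified Lean document; each statement's English description precedes it below -/
import Mathlib

section
/- There exists a constant c > 0 such that for every n ≥ 2, every complex Hilbert space H, and every bi-orthogonal pair {v_1,...,v_n}, {w_1,...,w_n} in H (i.e. ⟨v_j, w_k⟩ = δ_{jk} for all 1 ≤ j,k ≤ n), one has log n ≤ c · (max_{1≤m≤n} ‖w_m‖) · (max_{1≤k≤n} ‖∑_{j=1}^k v_j‖). -/
open Complex Real intervalIntegral Finset

noncomputable section
namespace Stmt0Aux

lemma L2 (d : ℤ) : (∫ t in (0:ℝ)..(2*π), Complex.exp (Complex.I * d * t))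
    = if d = 0 then (2*π : ℂ) else 0 := by
  by_cases hd : d = 0
  · simp [hd]
  · have hc : (Complex.I * d : ℂ) ≠ 0 := by
      simp [Complex.I_ne_zero, hd]
    rw [show (fun t : ℝ => Complex.exp (Complex.I * d * t)) = fun t : ℝ => Complex.exp ((Complex.I * d) * t) from rfl]
    rw [integral_exp_mul_complex hc]
    have : Complex.exp (Complex.I * d * (2*π)) = 1 := by
      rw [show (Complex.I * d * (2*π) : ℂ) = d * (2 * π * Complex.I) by ring]
      exact Complex.exp_int_mul_two_pi_mul_I d
    simp [hd, this]

lemma L3 (d : ℤ) : (∫ t in (0:ℝ)..(2*π), (-Complex.I/2) * Complex.exp (Complex.I * (d + 1/2) * t))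
    = 1 / (d + 1/2) := by
  have hs : ((d : ℂ) + 1/2) ≠ 0 := by
    intro h
    have : (d : ℂ) = -(1/2) := by linear_combination h
    have := congrArg Complex.re this
    simp at this
    have h2 : ((2*d : ℤ) : ℝ) = -1 := by push_cast; linarith
    have : (2*d : ℤ) = -1 := by exact_mod_cast h2
    omega
  have hc : (Complex.I * (d + 1/2) : ℂ) ≠ 0 := mul_ne_zero Complex.I_ne_zero hs
  rw [intervalIntegral.integral_const_mul, integral_exp_mul_complex hc]
  have h1 : Complex.exp (Complex.I * (d + 1/2) * ((2*π : ℝ) : ℂ)) = -1 := by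
    push_cast
    rw [show (Complex.I * ((d:ℂ) + 1/2) * (2*π) : ℂ) = (d * (2*π) + π) * Complex.I by ring]
    rw [show ((d:ℂ) * (2*π) + π) * Complex.I = (d:ℂ) * (2 * π * Complex.I) + π * Complex.I by ring]
    rw [Complex.exp_add, Complex.exp_int_mul_two_pi_mul_I, Complex.exp_pi_mul_I]
    ring
  rw [h1]
  norm_num
  rw [show (-Complex.I/2 * (-2 / (Complex.I * ((d:ℂ) + 1/2))) : ℂ)
      = Complex.I / (Complex.I * ((d:ℂ) + 1/2)) by ring]
  rw [mul_comm, ← div_div, div_right_comm, div_self Complex.I_ne_zero, ← inv_eq_one_div]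

variable {H : Type} [NormedAddCommGroup H] [InnerProductSpace ℂ H]

/-- the exponential coefficient -/
def E (m : ℕ) (t : ℝ) : ℂ := Complex.exp (-(Complex.I * m * t))

lemma contE (m : ℕ) : Continuous (E m) := by
  unfold E; fun_prop

/-- the trigonometric polynomial -/
def F {n : ℕ} (u : Fin n → H) (t : ℝ) : H := ∑ m : Fin n, E m t • u m

lemma contF {n : ℕ} (u : Fin n → H) : Continuous (F u) := by
  unfold F
  exact continuous_finset_sum _ fun m _ => (contE m).smul continuous_const

lemma inner_FG {n : ℕ} (u w : Fin n → H) (t : ℝ) :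
    (inner ℂ (F u t) (F w t) : ℂ)
    = ∑ m : Fin n, ∑ k : Fin n,
        Complex.exp (Complex.I * (((((m:ℕ):ℤ) - ((k:ℕ):ℤ)) : ℤ) : ℂ) * t) * (inner ℂ (u m) (w k) : ℂ) := by
  unfold F
  rw [sum_inner]
  refine Finset.sum_congr rfl fun m _ => ?_
  rw [inner_sum]
  refine Finset.sum_congr rfl fun k _ => ?_
  rw [inner_smul_left, inner_smul_right, ← mul_assoc]
  congr 1
  unfold E
  rw [← Complex.exp_conj, ← Complex.exp_add]
  congr 1
  have : (starRingEnd ℂ) (-(Complex.I * m * t)) = Complex.I * m * t := by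
    simp [map_mul, Complex.conj_I, Complex.conj_ofReal]
  rw [this]
  push_cast
  ring


lemma parseval_c {n : ℕ} (u : Fin n → H) :
    (∫ t in (0:ℝ)..(2*π), (inner ℂ (F u t) (F u t) : ℂ))
    = (2*π : ℝ) * ∑ m : Fin n, ((‖u m‖ : ℂ))^2 := by
  have h1 : (∫ t in (0:ℝ)..(2*π), (inner ℂ (F u t) (F u t) : ℂ))
      = ∑ m : Fin n, ∑ k : Fin n,
          (∫ t in (0:ℝ)..(2*π), Complex.exp (Complex.I * (((((m:ℕ):ℤ) - ((k:ℕ):ℤ)) : ℤ) : ℂ) * t))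
            * (inner ℂ (u m) (u k) : ℂ) := by
    rw [show (fun t : ℝ => (inner ℂ (F u t) (F u t) : ℂ))
        = fun t : ℝ => ∑ m : Fin n, ∑ k : Fin n,
            Complex.exp (Complex.I * (((((m:ℕ):ℤ) - ((k:ℕ):ℤ)) : ℤ) : ℂ) * t) * (inner ℂ (u m) (u k) : ℂ)
        from funext fun t : ℝ => inner_FG u u t]
    rw [intervalIntegral.integral_finset_sum]
    · refine Finset.sum_congr rfl fun m _ => ?_
      rw [intervalIntegral.integral_finset_sum]
      · exact Finset.sum_congr rfl fun k _ => intervalIntegral.integral_mul_const _ _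
      · intro k _
        apply Continuous.intervalIntegrable
        fun_prop
    · intro m _
      apply Continuous.intervalIntegrable
      apply continuous_finset_sum
      intro k _
      fun_prop
  rw [h1]
  rw [Finset.mul_sum]
  refine Finset.sum_congr rfl fun m _ => ?_
  rw [Finset.sum_eq_single m]
  · rw [L2, if_pos (by omega), inner_self_eq_norm_sq_to_K]
    norm_cast
    push_cast
    ring_nf
    rfl
  · intro k _ hk
    have hd : ((m:ℕ):ℤ) - ((k:ℕ):ℤ) ≠ 0 := by
      intro h
      exact hk (Fin.ext (by omega)).symm
    rw [L2, if_neg hd, zero_mul]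
  · intro h
    exact absurd (Finset.mem_univ m) h

lemma parseval_r {n : ℕ} (u : Fin n → H) :
    (∫ t in (0:ℝ)..(2*π), ‖F u t‖^2) = (2*π) * ∑ m : Fin n, ‖u m‖^2 := by
  have hInt : IntervalIntegrable (fun t => (inner ℂ (F u t) (F u t) : ℂ)) MeasureTheory.volume 0 (2*π) := by
    apply Continuous.intervalIntegrable
    exact Continuous.inner (contF u) (contF u)
  have := Complex.reCLM.intervalIntegral_comp_comm hInt
  have heq : (fun t => Complex.reCLM ((inner ℂ (F u t) (F u t) : ℂ))) = fun t => ‖F u t‖^2 := by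
    funext t
    simp only [Complex.reCLM_apply]
    rw [inner_self_eq_norm_sq_to_K]
    norm_cast
  rw [heq] at this
  rw [this, parseval_c]
  norm_cast


/-- the multiplier function, |gfun| = 1/2 -/
def gfun (t : ℝ) : ℂ := (-Complex.I/2) * Complex.exp (Complex.I * (1/2 : ℂ) * t)

lemma cont_gfun : Continuous gfun := by unfold gfun; fun_prop

lemma norm_gfun (t : ℝ) : ‖gfun t‖ = 1/2 := by
  unfold gfun
  rw [norm_mul, Complex.norm_exp]
  have : (Complex.I * (1/2 : ℂ) * (t:ℂ)).re = 0 := by simp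
  rw [this, Real.exp_zero]
  simp

lemma rep {n : ℕ} (u w : Fin n → H) :
    (∫ t in (0:ℝ)..(2*π), gfun t * (inner ℂ (F u t) (F w t) : ℂ))
    = ∑ m : Fin n, ∑ k : Fin n,
        (inner ℂ (u m) (w k) : ℂ) / (((((m:ℕ):ℤ) - ((k:ℕ):ℤ) : ℤ):ℂ) + 1/2) := by
  have h0 : (fun t : ℝ => gfun t * (inner ℂ (F u t) (F w t) : ℂ))
      = fun t : ℝ => ∑ m : Fin n, ∑ k : Fin n,
          (inner ℂ (u m) (w k) : ℂ) *
            ((-Complex.I/2) * Complex.exp (Complex.I * ((((((m:ℕ):ℤ) - ((k:ℕ):ℤ)) : ℤ):ℂ) + 1/2) * t)) := by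
    funext t
    rw [inner_FG, Finset.mul_sum]
    refine Finset.sum_congr rfl fun m _ => ?_
    rw [Finset.mul_sum]
    refine Finset.sum_congr rfl fun k _ => ?_
    have he : Complex.exp (Complex.I * ((((((m:ℕ):ℤ) - ((k:ℕ):ℤ)) : ℤ):ℂ) + 1/2) * t)
        = Complex.exp (Complex.I * (1/2 : ℂ) * t)
          * Complex.exp (Complex.I * (((((m:ℕ):ℤ) - ((k:ℕ):ℤ) : ℤ)):ℂ) * t) := by
      rw [← Complex.exp_add]
      congr 1
      ring
    rw [he]
    unfold gfun
    ring
  rw [h0, intervalIntegral.integral_finset_sum]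
  · refine Finset.sum_congr rfl fun m _ => ?_
    rw [intervalIntegral.integral_finset_sum]
    · refine Finset.sum_congr rfl fun k _ => ?_
      rw [intervalIntegral.integral_const_mul, L3]
      rw [mul_one_div]
    · intro k _
      apply Continuous.intervalIntegrable
      fun_prop
  · intro m _
    apply Continuous.intervalIntegrable
    apply continuous_finset_sum
    intro k _
    fun_prop

lemma amgm {a b V W : ℝ} (hV : 0 < V) (hW : 0 < W) (ha : 0 ≤ a) (hb : 0 ≤ b) :
    a * b ≤ 1/2 * ((W/V) * a^2 + (V/W) * b^2) := by
  have h := sq_nonneg (W*a - V*b)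
  have h2 : 2*(V*W)*(a*b) ≤ W^2*a^2 + V^2*b^2 := by nlinarith
  have h3 : (W/V) * a^2 = (W^2*a^2)/(V*W) := by field_simp
  have h4 : (V/W) * b^2 = (V^2*b^2)/(V*W) := by field_simp
  rw [h3, h4, ← add_div, ← mul_div_assoc, le_div_iff₀ (by positivity)]
  nlinarith


lemma harmonic_ge (m : ℕ) :
    Real.log (2*(m:ℝ)+2) ≤ ∑ d ∈ Finset.range (m+1), ((d:ℝ)+1/2)⁻¹ := by
  have tele : ∑ d ∈ Finset.range (m+1),
      (Real.log (((d:ℝ)+1)+1/2) - Real.log ((d:ℝ)+1/2))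
      = Real.log (((m:ℝ)+1)+1/2) - Real.log (1/2) := by
    have h := Finset.sum_range_sub (f := fun d : ℕ => Real.log ((d:ℝ)+1/2)) (m+1)
    have h2 : ∀ d : ℕ, Real.log (((d+1 : ℕ):ℝ)+1/2) = Real.log (((d:ℝ)+1)+1/2) := by
      intro d; push_cast; ring_nf
    simp only [h2] at h
    simpa using h
  have term : ∀ d ∈ Finset.range (m+1),
      Real.log (((d:ℝ)+1)+1/2) - Real.log ((d:ℝ)+1/2) ≤ ((d:ℝ)+1/2)⁻¹ := by
    intro d _
    have hd : (0:ℝ) < (d:ℝ)+1/2 := by positivity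
    rw [← Real.log_div (by positivity) (ne_of_gt hd)]
    have h := Real.log_le_sub_one_of_pos (x := (((d:ℝ)+1)+1/2)/((d:ℝ)+1/2)) (by positivity)
    have he : (((d:ℝ)+1)+1/2)/((d:ℝ)+1/2) - 1 = ((d:ℝ)+1/2)⁻¹ := by
      field_simp
      ring
    linarith
  have hlog : Real.log (2*(m:ℝ)+2) ≤ Real.log (((m:ℝ)+1)+1/2) - Real.log (1/2) := by
    rw [← Real.log_div (by positivity) (by norm_num)]
    apply Real.log_le_log (by positivity)
    rw [div_div_eq_mul_div, le_div_iff₀ (by norm_num)]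
    nlinarith [Nat.cast_nonneg (α := ℝ) m]
  calc Real.log (2*(m:ℝ)+2) ≤ Real.log (((m:ℝ)+1)+1/2) - Real.log (1/2) := hlog
    _ = ∑ d ∈ Finset.range (m+1), (Real.log (((d:ℝ)+1)+1/2) - Real.log ((d:ℝ)+1/2)) := tele.symm
    _ ≤ ∑ d ∈ Finset.range (m+1), ((d:ℝ)+1/2)⁻¹ := Finset.sum_le_sum term

lemma sum_log_ge {n : ℕ} (hn : 1 ≤ n) :
    1/2 * ((n:ℝ) * Real.log n) ≤ ∑ m ∈ Finset.range n, Real.log (2*(m:ℝ)+2) := by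
  have hrefl : ∑ m ∈ Finset.range n, Real.log (2*(m:ℝ)+2)
      = ∑ m ∈ Finset.range n, Real.log (2*((n-1-m : ℕ):ℝ)+2) :=
    (Finset.sum_range_reflect (fun m => Real.log (2*(m:ℝ)+2)) n).symm
  have pair : ∀ m ∈ Finset.range n,
      Real.log n ≤ Real.log (2*(m:ℝ)+2) + Real.log (2*((n-1-m : ℕ):ℝ)+2) := by
    intro m hm
    rw [Finset.mem_range] at hm
    have hc : ((n-1-m : ℕ):ℝ) = (n:ℝ)-1-(m:ℝ) := by
      have h1 : m ≤ n-1 := by omega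
      rw [Nat.sub_sub, Nat.cast_sub (by omega), Nat.cast_add]
      push_cast; ring
    have hm' : (m:ℝ) ≤ (n:ℝ) - 1 := by
      have h2 : (m:ℝ) + 1 ≤ (n:ℝ) := by exact_mod_cast Nat.succ_le_of_lt hm
      linarith
    rw [hc, ← Real.log_mul (by positivity) (by nlinarith)]
    apply Real.log_le_log (by exact_mod_cast Nat.lt_of_lt_of_le Nat.zero_lt_one hn)
    nlinarith [Nat.cast_nonneg (α := ℝ) m]
  have hsum : (n:ℝ) * Real.log n ≤ 2 * ∑ m ∈ Finset.range n, Real.log (2*(m:ℝ)+2) := by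
    calc (n:ℝ) * Real.log n = ∑ _m ∈ Finset.range n, Real.log n := by
          rw [Finset.sum_const, Finset.card_range, nsmul_eq_mul]
      _ ≤ ∑ m ∈ Finset.range n, (Real.log (2*(m:ℝ)+2) + Real.log (2*((n-1-m : ℕ):ℝ)+2)) :=
          Finset.sum_le_sum pair
      _ = ∑ m ∈ Finset.range n, Real.log (2*(m:ℝ)+2)
          + ∑ m ∈ Finset.range n, Real.log (2*((n-1-m : ℕ):ℝ)+2) := Finset.sum_add_distrib
      _ = 2 * ∑ m ∈ Finset.range n, Real.log (2*(m:ℝ)+2) := by rw [← hrefl]; ring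
  linarith


lemma main_ineq {n : ℕ} (hn : 2 ≤ n) {H : Type} [NormedAddCommGroup H] [InnerProductSpace ℂ H]
    (S w : Fin n → H)
    (hSw : ∀ m k : Fin n, (inner ℂ (S m) (w k) : ℂ) = if (k:ℕ) ≤ (m:ℕ) then 1 else 0)
    (W V : ℝ) (hW : ∀ m, ‖w m‖ ≤ W) (hV : ∀ m, ‖S m‖ ≤ V) :
    Real.log n ≤ 7 * W * V := by
  have hn0 : (0:ℝ) < n := by positivity
  set k0 : Fin n := ⟨0, by omega⟩ with hk0
  have h1 : (1:ℝ) ≤ ‖S k0‖ * ‖w k0‖ := by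
    have h := norm_inner_le_norm (𝕜 := ℂ) (S k0) (w k0)
    rw [hSw k0 k0, if_pos (le_refl _)] at h
    simpa using h
  have hV0 : 0 < V := by
    have := hV k0
    have := hW k0
    nlinarith [norm_nonneg (S k0), norm_nonneg (w k0)]
  have hW0 : 0 < W := by
    have := hV k0
    have := hW k0
    nlinarith [norm_nonneg (S k0), norm_nonneg (w k0)]
  set B : ℝ := ∑ m : Fin n, ∑ k : Fin n,
      (if (k:ℕ) ≤ (m:ℕ) then ((m:ℝ) - (k:ℝ) + 1/2)⁻¹ else 0) with hB
  have hBC : (∫ t in (0:ℝ)..(2*π), gfun t * (inner ℂ (F S t) (F w t):ℂ)) = (B:ℂ) := by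
    rw [rep S w, hB]
    push_cast
    refine Finset.sum_congr rfl fun m _ => Finset.sum_congr rfl fun k _ => ?_
    rw [hSw m k]
    by_cases hc : (k:ℕ) ≤ (m:ℕ)
    · rw [if_pos hc, if_pos hc]
      rw [div_eq_mul_inv, one_mul]
      push_cast
      ring
    · rw [if_neg hc, if_neg hc, zero_div]
      norm_cast
  have hBpos : 0 ≤ B := by
    rw [hB]
    apply Finset.sum_nonneg
    intro m _
    apply Finset.sum_nonneg
    intro k _
    by_cases hc : (k:ℕ) ≤ (m:ℕ)
    · rw [if_pos hc]
      have hkm : (k:ℝ) ≤ (m:ℝ) := by exact_mod_cast hc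
      exact le_of_lt (inv_pos.mpr (by linarith))
    · rw [if_neg hc]
  -- upper bound
  have hSum1 : ∑ m : Fin n, ‖S m‖^2 ≤ (n:ℝ) * V^2 := by
    calc ∑ m : Fin n, ‖S m‖^2 ≤ ∑ _m : Fin n, V^2 :=
          Finset.sum_le_sum fun m _ => by
            have := hV m; nlinarith [norm_nonneg (S m)]
      _ = (n:ℝ) * V^2 := by simp [Finset.sum_const, nsmul_eq_mul]
  have hSum2 : ∑ m : Fin n, ‖w m‖^2 ≤ (n:ℝ) * W^2 := by
    calc ∑ m : Fin n, ‖w m‖^2 ≤ ∑ _m : Fin n, W^2 :=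
          Finset.sum_le_sum fun m _ => by
            have := hW m; nlinarith [norm_nonneg (w m)]
      _ = (n:ℝ) * W^2 := by simp [Finset.sum_const, nsmul_eq_mul]
  have hBle : B ≤ π * n * (V*W) := by
    have hπ := Real.two_pi_pos
    calc B = ‖(B:ℂ)‖ := by rw [Complex.norm_real]; exact (_root_.abs_of_nonneg hBpos).symm
      _ = ‖∫ t in (0:ℝ)..(2*π), gfun t * (inner ℂ (F S t) (F w t):ℂ)‖ := by rw [hBC]
      _ ≤ ∫ t in (0:ℝ)..(2*π), ‖gfun t * (inner ℂ (F S t) (F w t):ℂ)‖ :=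
          intervalIntegral.norm_integral_le_integral_norm (by linarith)
      _ ≤ ∫ t in (0:ℝ)..(2*π), 1/4 * ((W/V) * ‖F S t‖^2 + (V/W) * ‖F w t‖^2) := by
          apply intervalIntegral.integral_mono_on (by linarith)
          · apply Continuous.intervalIntegrable
            exact ((cont_gfun).mul ((contF S).inner (contF w))).norm
          · apply Continuous.intervalIntegrable
            apply Continuous.mul continuous_const
            exact (continuous_const.mul ((contF S).norm.pow 2)).add
              (continuous_const.mul ((contF w).norm.pow 2))
          · intro t _
            rw [norm_mul, norm_gfun]
            have h2 : ‖(inner ℂ (F S t) (F w t):ℂ)‖ ≤ ‖F S t‖ * ‖F w t‖ := norm_inner_le_norm _ _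
            have h3 := amgm (a := ‖F S t‖) (b := ‖F w t‖) hV0 hW0 (norm_nonneg _) (norm_nonneg _)
            nlinarith
      _ = 1/4 * ((W/V) * ((2*π) * ∑ m : Fin n, ‖S m‖^2)
            + (V/W) * ((2*π) * ∑ m : Fin n, ‖w m‖^2)) := by
          have hi1 : IntervalIntegrable (fun t => (W/V) * ‖F S t‖^2) MeasureTheory.volume 0 (2*π) :=
            Continuous.intervalIntegrable (continuous_const.mul ((contF S).norm.pow 2)) 0 (2*π)
          have hi2 : IntervalIntegrable (fun t => (V/W) * ‖F w t‖^2) MeasureTheory.volume 0 (2*π) :=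
            Continuous.intervalIntegrable (continuous_const.mul ((contF w).norm.pow 2)) 0 (2*π)
          rw [intervalIntegral.integral_const_mul, intervalIntegral.integral_add hi1 hi2,
            intervalIntegral.integral_const_mul, intervalIntegral.integral_const_mul,
            parseval_r, parseval_r]
      _ ≤ 1/4 * ((W/V) * ((2*π) * ((n:ℝ) * V^2)) + (V/W) * ((2*π) * ((n:ℝ) * W^2))) := by
          gcongr
      _ = π * n * (V*W) := by field_simp; ring
  -- lower bound
  have hInner : ∀ m : Fin n, Real.log (2*((m:ℕ):ℝ)+2)
      ≤ ∑ k : Fin n, (if (k:ℕ) ≤ (m:ℕ) then ((m:ℝ) - (k:ℝ) + 1/2)⁻¹ else 0) := by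
    intro m
    have e1 : ∑ k : Fin n, (if (k:ℕ) ≤ (m:ℕ) then ((m:ℝ) - (k:ℝ) + 1/2)⁻¹ else 0)
        = ∑ k ∈ Finset.range n, (if k ≤ (m:ℕ) then (((m:ℕ):ℝ) - (k:ℝ) + 1/2)⁻¹ else 0) :=
      Fin.sum_univ_eq_sum_range (fun k => if k ≤ (m:ℕ) then (((m:ℕ):ℝ) - (k:ℝ) + 1/2)⁻¹ else 0) n
    have e2 : ∑ k ∈ Finset.range n, (if k ≤ (m:ℕ) then (((m:ℕ):ℝ) - (k:ℝ) + 1/2)⁻¹ else 0)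
        = ∑ k ∈ Finset.range ((m:ℕ)+1), (((m:ℕ):ℝ) - (k:ℝ) + 1/2)⁻¹ := by
      rw [← Finset.sum_subset (Finset.range_subset_range.mpr (by omega : (m:ℕ)+1 ≤ n))]
      · exact Finset.sum_congr rfl fun k hk => if_pos (by rw [Finset.mem_range] at hk; omega)
      · intro k _ hk
        rw [Finset.mem_range] at hk
        exact if_neg (by omega)
    have e3 : ∑ k ∈ Finset.range ((m:ℕ)+1), (((m:ℕ):ℝ) - (k:ℝ) + 1/2)⁻¹
        = ∑ d ∈ Finset.range ((m:ℕ)+1), ((d:ℝ)+1/2)⁻¹ := by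
      rw [← Finset.sum_range_reflect (fun d : ℕ => ((d:ℝ)+1/2)⁻¹) ((m:ℕ)+1)]
      refine Finset.sum_congr rfl fun k hk => ?_
      rw [Finset.mem_range] at hk
      have hc2 : ((m:ℕ)+1-1-k : ℕ) = (m:ℕ)-k := by omega
      rw [hc2, Nat.cast_sub (by omega)]
    rw [e1, e2, e3]
    exact harmonic_ge (m:ℕ)
  have hBlow : 1/2 * ((n:ℝ) * Real.log n) ≤ B := by
    calc 1/2 * ((n:ℝ) * Real.log n) ≤ ∑ m ∈ Finset.range n, Real.log (2*(m:ℝ)+2) :=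
          sum_log_ge (by omega)
      _ = ∑ m : Fin n, Real.log (2*((m:ℕ):ℝ)+2) :=
          (Fin.sum_univ_eq_sum_range (fun m => Real.log (2*(m:ℝ)+2)) n).symm
      _ ≤ B := by
          rw [hB]
          exact Finset.sum_le_sum fun m _ => hInner m
  -- combine
  have hVW : 0 < V * W := mul_pos hV0 hW0
  have hkey : Real.log n ≤ 2 * π * (V * W) := by
    have h := hBlow.trans hBle
    nlinarith
  have hπ : π < 3.15 := Real.pi_lt_d2
  nlinarith

end Stmt0Aux




/-- Theorem 1 (main result): there is an absolute constant `c > 0` such that for every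
`n ≥ 2`, every complex Hilbert space `H`, and every bi-orthogonal pair
`v, w : Fin n → H` (i.e. `⟪v j, w k⟫ = δ_{jk}`), one has
`log n ≤ c * (max_m ‖w m‖) * (max_k ‖∑_{j ≤ k} v j‖)`. -/
theorem stmt0 :
    ∃ c : ℝ, 0 < c ∧
      ∀ (n : ℕ) (hn : 2 ≤ n),
        ∀ (H : Type) [NormedAddCommGroup H] [InnerProductSpace ℂ H] [CompleteSpace H],
          ∀ (v w : Fin n → H),
            (∀ j k : Fin n, (inner ℂ (v j) (w k) : ℂ) = if j = k then 1 else 0) →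
            Real.log n ≤
              c * ((Finset.univ : Finset (Fin n)).sup'
                    ⟨⟨0, by omega⟩, Finset.mem_univ _⟩ fun m => ‖w m‖)
                * ((Finset.univ : Finset (Fin n)).sup'
                    ⟨⟨0, by omega⟩, Finset.mem_univ _⟩ fun k => ‖∑ j ∈ Finset.Iic k, v j‖) := by

  refine ⟨7, by norm_num, ?_⟩
  intro n hn H _ _ _ v w hbi
  have hSw : ∀ m k : Fin n, (inner ℂ (∑ j ∈ Finset.Iic m, v j) (w k) : ℂ)
      = if (k:ℕ) ≤ (m:ℕ) then 1 else 0 := by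
    intro m k
    rw [sum_inner]
    simp only [hbi]
    rw [Finset.sum_ite_eq' (Finset.Iic m) k (fun _ => (1:ℂ))]
    by_cases h : k ≤ m
    · rw [if_pos (Finset.mem_Iic.mpr h), if_pos (Fin.le_def.mp h)]
    · rw [if_neg (fun hm => h (Finset.mem_Iic.mp hm)), if_neg (fun hc => h (Fin.le_def.mpr hc))]
  exact Stmt0Aux.main_ineq hn (fun m => ∑ j ∈ Finset.Iic m, v j) w hSw _ _
    (fun m => Finset.le_sup' (f := fun m => ‖w m‖) (Finset.mem_univ m))
    (fun m => Finset.le_sup' (f := fun k => ‖∑ j ∈ Finset.Iic k, v j‖) (Finset.mem_univ m))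
end
end

section
/- Let {v_1,...,v_n} and {w_1,...,w_n} be a bi-orthogonal pair in a Hilbert space H with all w_k ≠ 0, let F_1,...,F_n be orthonormal in L²([0,1]), let f_1 ≥ ... ≥ f_n be pointwise decreasing indicator functions of measurable subsets of [0,1], and let G ∈ L²([0,1]). Then ∑_{k=1}^n |∫_{[0,1]} G f_k \overline{F_k} dλ|² / ‖w_k‖²_H ≤ ‖G‖²₂ · max_{1≤k≤n} ‖∑_{j=1}^k v_j‖²_H. -/
open MeasureTheory

private theorem Lp_coeFn_sum' {α E : Type*} [NormedAddCommGroup E] {m : MeasurableSpace α}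
    {μ : Measure α} {p : ENNReal} {ι : Type*} (s : Finset ι) (q : ι → Lp E p μ) :
    (↑(∑ i ∈ s, q i) : α → E) =ᵐ[μ] fun a => ∑ i ∈ s, (q i : α → E) a := by
  classical
  induction s using Finset.induction_on with
  | empty => simp only [Finset.sum_empty]; exact Lp.coeFn_zero E p μ
  | insert a s h ih =>
    filter_upwards [Lp.coeFn_add (q a) (∑ i ∈ s, q i), ih] with x h1 h2
    rw [Finset.sum_insert h, h1, Pi.add_apply, h2, Finset.sum_insert h]

/-- The key inequality (eq. 4 of the paper): for a bi-orthogonal pair `v, w` in `H`,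
an orthonormal set `F₁,...,Fₙ` in `L²([0,1])`, decreasing indicator functions
`f₁ ≥ ... ≥ fₙ`, and `G ∈ L²([0,1])`:
`∑ₖ |∫ G fₖ conj(Fₖ) dλ|² / ‖wₖ‖² ≤ ‖G‖₂² · maxₖ ‖∑_{j≤k} vⱼ‖²`. -/
theorem stmt3
    (H : Type) [NormedAddCommGroup H] [InnerProductSpace ℂ H] [CompleteSpace H]
    (n : ℕ) (hn : 1 ≤ n) (v w : ℕ → H)
    (hbi : ∀ j ∈ Finset.Icc 1 n, ∀ k ∈ Finset.Icc 1 n,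
      (inner ℂ (v j) (w k) : ℂ) = if j = k then 1 else 0)
    (hw : ∀ k ∈ Finset.Icc 1 n, w k ≠ 0)
    (μ : Measure ℝ) (hμ : μ = volume.restrict (Set.Icc (0:ℝ) 1))
    (F : ℕ → ℝ → ℂ)
    (hF2 : ∀ k ∈ Finset.Icc 1 n, MemLp (F k) 2 μ)
    (hFon : ∀ j ∈ Finset.Icc 1 n, ∀ k ∈ Finset.Icc 1 n,
      ∫ x, F k x * (starRingEnd ℂ) (F j x) ∂μ = if k = j then 1 else 0)
    (f : ℕ → ℝ → ℝ)
    (hf_ind : ∀ k, 1 ≤ k → k ≤ n →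
      ∃ s : Set ℝ, MeasurableSet s ∧ f k = s.indicator (fun _ => (1:ℝ)))
    (hf_dec : ∀ k, 1 ≤ k → k < n → ∀ x, f (k + 1) x ≤ f k x)
    (G : ℝ → ℂ) (hG : MemLp G 2 μ) :
    ∑ k ∈ Finset.Icc 1 n,
        ‖∫ x, G x * f k x * (starRingEnd ℂ) (F k x) ∂μ‖ ^ 2 / ‖w k‖ ^ 2
      ≤ (∫ x, ‖G x‖ ^ 2 ∂μ) *
          (Finset.Icc 1 n).sup' (Finset.nonempty_Icc.mpr hn)
            (fun k => ‖∑ j ∈ Finset.Icc 1 k, v j‖ ^ 2) := by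
  classical
  set M : ℝ := (Finset.Icc 1 n).sup' (Finset.nonempty_Icc.mpr hn)
      (fun k => ‖∑ j ∈ Finset.Icc 1 k, v j‖ ^ 2) with hMdef
  have hM0 : 0 ≤ M := le_trans (by positivity)
    (Finset.le_sup' (fun k => ‖∑ j ∈ Finset.Icc 1 k, v j‖ ^ 2)
      (Finset.mem_Icc.mpr ⟨le_refl 1, hn⟩))
  -- basic facts about f
  have hf01 : ∀ k, 1 ≤ k → k ≤ n → ∀ x, f k x = 0 ∨ f k x = 1 := by
    intro k hk1 hk2 x
    obtain ⟨s, _, hfk⟩ := hf_ind k hk1 hk2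
    rw [hfk]
    by_cases hx : x ∈ s
    · right; simp [Set.indicator_of_mem hx]
    · left; simp [Set.indicator_of_notMem hx]
  have hf_le1 : ∀ k, 1 ≤ k → k ≤ n → ∀ x, f k x ≤ 1 := by
    intro k hk1 hk2 x
    rcases hf01 k hk1 hk2 x with h | h <;> simp [h]
  have hmono : ∀ x, ∀ i j : ℕ, 1 ≤ i → i ≤ j → j ≤ n → f j x ≤ f i x := by
    intro x i j hi hij hj
    induction j, hij using Nat.le_induction with
    | base => exact le_refl _
    | succ m hm ih =>
      exact le_trans (hf_dec m (le_trans hi hm) (by omega) x) (ih (by omega))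
  have hfmeas : ∀ k, 1 ≤ k → k ≤ n → Measurable (f k) := by
    intro k hk1 hk2
    obtain ⟨s, hs, hfk⟩ := hf_ind k hk1 hk2
    rw [hfk]; exact measurable_const.indicator hs
  -- g j = G * f j  (complex valued)
  set g : ℕ → ℝ → ℂ := fun j a => G a * (f j a : ℝ) with hgdef
  have hgmem : ∀ j, 1 ≤ j → j ≤ n → MemLp (g j) 2 μ := by
    intro j hj1 hj2
    refine hG.mono (hG.aestronglyMeasurable.mul ?_) ?_
    · exact (Complex.measurable_ofReal.comp (hfmeas j hj1 hj2)).aestronglyMeasurable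
    · refine Filter.Eventually.of_forall fun a => ?_
      have h1 : ‖(f j a : ℂ)‖ ≤ 1 := by
        rw [Complex.norm_real]
        rcases hf01 j hj1 hj2 a with h | h <;> simp [h]
      calc ‖g j a‖ = ‖G a‖ * ‖(f j a : ℂ)‖ := norm_mul _ _
        _ ≤ ‖G a‖ * 1 := by gcongr
        _ = ‖G a‖ := mul_one _
  -- MemLp of the vector-valued functions
  have hqmem : ∀ j, 1 ≤ j → j ≤ n → MemLp (fun a => g j a • v j) 2 μ := by
    intro j hj1 hj2
    have := ((ContinuousLinearMap.id ℂ ℂ).smulRight (v j)).comp_memLp' (hgmem j hj1 hj2)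
    simpa [Function.comp_def] using this
  have hpmem : ∀ k, 1 ≤ k → k ≤ n → MemLp (fun a => F k a • w k) 2 μ := by
    intro k hk1 hk2
    have := ((ContinuousLinearMap.id ℂ ℂ).smulRight (w k)).comp_memLp'
      (hF2 k (Finset.mem_Icc.mpr ⟨hk1, hk2⟩))
    simpa [Function.comp_def] using this
  -- Lp elements
  set Q : ℕ → Lp H 2 μ := fun j =>
    if hj : 1 ≤ j ∧ j ≤ n then (hqmem j hj.1 hj.2).toLp _ else 0 with hQdef
  set p : ℕ → Lp H 2 μ := fun k =>
    if hk : 1 ≤ k ∧ k ≤ n then (hpmem k hk.1 hk.2).toLp _ else 0 with hpdef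
  have hQcoe : ∀ j ∈ Finset.Icc 1 n, (Q j : ℝ → H) =ᵐ[μ] fun a => g j a • v j := by
    intro j hj
    rw [Finset.mem_Icc] at hj
    simp only [hQdef, dif_pos hj]
    exact MemLp.coeFn_toLp _
  have hpcoe : ∀ k ∈ Finset.Icc 1 n, (p k : ℝ → H) =ᵐ[μ] fun a => F k a • w k := by
    intro k hk
    rw [Finset.mem_Icc] at hk
    simp only [hpdef, dif_pos hk]
    exact MemLp.coeFn_toLp _
  set P : Lp H 2 μ := ∑ j ∈ Finset.Icc 1 n, Q j with hPdef
  have hPcoe : (P : ℝ → H) =ᵐ[μ] fun a => ∑ j ∈ Finset.Icc 1 n, g j a • v j := by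
    refine (Lp_coeFn_sum' _ _).trans ?_
    have : ∀ᵐ a ∂μ, ∀ j ∈ Finset.Icc 1 n, (Q j : ℝ → H) a = g j a • v j := by
      rw [Filter.eventually_all_finset]
      intro j hj
      exact hQcoe j hj
    filter_upwards [this] with a ha
    exact Finset.sum_congr rfl ha
  -- inner products ⟪p k, Q j⟫
  have hwv : ∀ j ∈ Finset.Icc 1 n, ∀ k ∈ Finset.Icc 1 n,
      (inner ℂ (w k) (v j) : ℂ) = if j = k then 1 else 0 := by
    intro j hj k hk
    rw [← inner_conj_symm, hbi j hj k hk]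
    split <;> simp
  have hinnerPQ : ∀ k ∈ Finset.Icc 1 n, ∀ j ∈ Finset.Icc 1 n,
      (inner ℂ (p k) (Q j) : ℂ)
        = (∫ a, (starRingEnd ℂ) (F k a) * g j a ∂μ) * (if j = k then 1 else 0) := by
    intro k hk j hj
    rw [L2.inner_def]
    have h1 : (fun a => (inner ℂ ((p k : ℝ → H) a) ((Q j : ℝ → H) a) : ℂ)) =ᵐ[μ]
        fun a => ((starRingEnd ℂ) (F k a) * g j a) * (inner ℂ (w k) (v j) : ℂ) := by
      filter_upwards [hpcoe k hk, hQcoe j hj] with a h1 h2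
      rw [h1, h2, inner_smul_left, inner_smul_right]
      ring
    rw [integral_congr_ae h1, integral_mul_const, hwv j hj k hk]
  -- ⟪p j, p k⟫
  have hinnerpp : ∀ j ∈ Finset.Icc 1 n, ∀ k ∈ Finset.Icc 1 n,
      (inner ℂ (p j) (p k) : ℂ) = if j = k then ((‖w k‖ : ℂ) ^ 2) else 0 := by
    intro j hj k hk
    rw [L2.inner_def]
    have h1 : (fun a => (inner ℂ ((p j : ℝ → H) a) ((p k : ℝ → H) a) : ℂ)) =ᵐ[μ]
        fun a => (F k a * (starRingEnd ℂ) (F j a)) * (inner ℂ (w j) (w k) : ℂ) := by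
      filter_upwards [hpcoe j hj, hpcoe k hk] with a h1 h2
      rw [h1, h2, inner_smul_left, inner_smul_right]
      ring
    rw [integral_congr_ae h1, integral_mul_const, hFon j hj k hk]
    by_cases hjk : j = k
    · subst hjk; simp [inner_self_eq_norm_sq_to_K]
    · simp [hjk, Ne.symm hjk]
  -- orthonormal family
  have hortho : Orthonormal ℂ (fun i : {x // x ∈ Finset.Icc 1 n} =>
      ((‖w (i : ℕ)‖ : ℂ))⁻¹ • p (i : ℕ)) := by
    rw [orthonormal_iff_ite]
    intro i j
    rw [inner_smul_left, inner_smul_right, hinnerpp (i : ℕ) i.2 (j : ℕ) j.2,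
      map_inv₀, Complex.conj_ofReal]
    rcases eq_or_ne i j with h | h
    · subst h
      rw [if_pos rfl, if_pos rfl]
      have hwne : (‖w (i : ℕ)‖ : ℂ) ≠ 0 := by
        simpa using norm_ne_zero_iff.mpr (hw (i : ℕ) i.2)
      field_simp
    · have hne : (i : ℕ) ≠ (j : ℕ) := fun hc => h (Subtype.ext hc)
      rw [if_neg hne, if_neg h]
      simp
  -- Bessel's inequality
  have key : ∑ k ∈ Finset.Icc 1 n,
      ‖(inner ℂ ((‖w k‖ : ℂ)⁻¹ • p k) P : ℂ)‖ ^ 2 ≤ ‖P‖ ^ 2 := by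
    have hb := hortho.sum_inner_products_le (s := Finset.univ) P
    rwa [Finset.sum_coe_sort (Finset.Icc 1 n)
      (fun k => ‖(inner ℂ ((‖w k‖ : ℂ)⁻¹ • p k) P : ℂ)‖ ^ 2)] at hb
  -- ⟪p k, P⟫ is the integral in the statement
  have hinnerP : ∀ k ∈ Finset.Icc 1 n,
      (inner ℂ (p k) P : ℂ) = ∫ x, G x * (f k x : ℝ) * (starRingEnd ℂ) (F k x) ∂μ := by
    intro k hk
    rw [hPdef, inner_sum]
    have hterm : ∀ j ∈ Finset.Icc 1 n, (inner ℂ (p k) (Q j) : ℂ)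
        = if j = k then (∫ a, (starRingEnd ℂ) (F k a) * g j a ∂μ) else 0 := by
      intro j hj; rw [hinnerPQ k hk j hj]; split <;> simp
    rw [Finset.sum_congr rfl hterm, Finset.sum_ite_eq' (Finset.Icc 1 n) k, if_pos hk]
    refine integral_congr_ae (Filter.Eventually.of_forall fun a => ?_)
    simp only [hgdef]; ring
  -- ‖P‖² as an integral
  have hPGmem : MemLp (fun a => ∑ j ∈ Finset.Icc 1 n, g j a • v j) 2 μ :=
    memLp_finset_sum _ (fun j hj => by
      rw [Finset.mem_Icc] at hj; exact hqmem j hj.1 hj.2)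
  have hPnorm : ‖P‖ ^ 2 = ∫ a, ‖∑ j ∈ Finset.Icc 1 n, g j a • v j‖ ^ 2 ∂μ := by
    have h2 := inner_self_eq_norm_sq (𝕜 := ℂ) P
    rw [← h2, L2.inner_def]
    have hstep : ∫ a, (inner ℂ ((P : ℝ → H) a) ((P : ℝ → H) a) : ℂ) ∂μ
        = ∫ a, (RCLike.ofReal (‖∑ j ∈ Finset.Icc 1 n, g j a • v j‖ ^ 2) : ℂ) ∂μ := by
      refine integral_congr_ae ?_
      filter_upwards [hPcoe] with a ha
      rw [ha, inner_self_eq_norm_sq_to_K, RCLike.ofReal_pow]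
    rw [hstep, integral_ofReal, RCLike.ofReal_re]
  -- pointwise bound
  have hpt : ∀ a, ‖∑ j ∈ Finset.Icc 1 n, g j a • v j‖ ^ 2 ≤ ‖G a‖ ^ 2 * M := by
    intro a
    have hsum : ∑ j ∈ Finset.Icc 1 n, g j a • v j
        = G a • ∑ j ∈ Finset.Icc 1 n, ((f j a : ℝ) : ℂ) • v j := by
      rw [Finset.smul_sum]
      exact Finset.sum_congr rfl fun j hj => (smul_smul _ _ _).symm
    have hT : ‖∑ j ∈ Finset.Icc 1 n, ((f j a : ℝ) : ℂ) • v j‖ ^ 2 ≤ M := by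
      by_cases hs : ((Finset.Icc 1 n).filter (fun j => f j a = 1)).Nonempty
      · set m := ((Finset.Icc 1 n).filter (fun j => f j a = 1)).max' hs with hm
        have hmmem := Finset.max'_mem _ hs
        rw [Finset.mem_filter] at hmmem
        obtain ⟨hmIcc, hfm⟩ := hmmem
        have hmIcc' := Finset.mem_Icc.mp hmIcc
        have heq1 : ∑ j ∈ Finset.Icc 1 m, ((f j a : ℝ) : ℂ) • v j
            = ∑ j ∈ Finset.Icc 1 n, ((f j a : ℝ) : ℂ) • v j := by
          refine Finset.sum_subset (Finset.Icc_subset_Icc_right hmIcc'.2) fun j hj hj2 => ?_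
          rw [Finset.mem_Icc] at hj
          have hjm : m < j := by
            rw [Finset.mem_Icc, not_and] at hj2
            omega
          have h0 : f j a = 0 := by
            rcases hf01 j hj.1 hj.2 a with h | h
            · exact h
            · exfalso
              have hjle : j ≤ m := Finset.le_max' _ j
                (Finset.mem_filter.mpr ⟨Finset.mem_Icc.mpr hj, h⟩)
              omega
          rw [h0]; simp
        have heq2 : ∑ j ∈ Finset.Icc 1 m, ((f j a : ℝ) : ℂ) • v j
            = ∑ j ∈ Finset.Icc 1 m, v j := by
          refine Finset.sum_congr rfl fun j hj => ?_
          rw [Finset.mem_Icc] at hj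
          have h1 : f j a = 1 := le_antisymm
            (hf_le1 j hj.1 (le_trans hj.2 hmIcc'.2) a)
            (hfm ▸ hmono a j m hj.1 hj.2 hmIcc'.2)
          rw [h1]; simp
        rw [← heq1, heq2]
        exact Finset.le_sup' (fun k => ‖∑ j ∈ Finset.Icc 1 k, v j‖ ^ 2) hmIcc
      · have hz : ∀ j ∈ Finset.Icc 1 n, ((f j a : ℝ) : ℂ) • v j = 0 := by
          intro j hj
          have hj' := Finset.mem_Icc.mp hj
          rcases hf01 j hj'.1 hj'.2 a with h | h
          · rw [h]; simp
          · exact absurd ⟨j, Finset.mem_filter.mpr ⟨hj, h⟩⟩ hs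
        rw [Finset.sum_eq_zero hz]
        simpa using hM0
    calc ‖∑ j ∈ Finset.Icc 1 n, g j a • v j‖ ^ 2
        = ‖G a‖ ^ 2 * ‖∑ j ∈ Finset.Icc 1 n, ((f j a : ℝ) : ℂ) • v j‖ ^ 2 := by
          rw [hsum, norm_smul, mul_pow]
      _ ≤ ‖G a‖ ^ 2 * M := by
          have : (0:ℝ) ≤ ‖G a‖ ^ 2 := by positivity
          exact mul_le_mul_of_nonneg_left hT this
  -- integrability for the final comparison
  have hInt1 : Integrable (fun a => ‖∑ j ∈ Finset.Icc 1 n, g j a • v j‖ ^ 2) μ :=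
    hPGmem.norm.integrable_sq
  have hInt2 : Integrable (fun a => ‖G a‖ ^ 2 * M) μ := hG.norm.integrable_sq.mul_const M
  -- assemble
  calc ∑ k ∈ Finset.Icc 1 n,
        ‖∫ x, G x * f k x * (starRingEnd ℂ) (F k x) ∂μ‖ ^ 2 / ‖w k‖ ^ 2
      = ∑ k ∈ Finset.Icc 1 n, ‖(inner ℂ ((‖w k‖ : ℂ)⁻¹ • p k) P : ℂ)‖ ^ 2 := by
        refine Finset.sum_congr rfl fun k hk => ?_
        rw [inner_smul_left, hinnerP k hk, map_inv₀, Complex.conj_ofReal, norm_mul,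
          norm_inv, Complex.norm_real, norm_norm, mul_pow]
        ring
    _ ≤ ‖P‖ ^ 2 := key
    _ = ∫ a, ‖∑ j ∈ Finset.Icc 1 n, g j a • v j‖ ^ 2 ∂μ := hPnorm
    _ ≤ ∫ a, ‖G a‖ ^ 2 * M ∂μ :=
        integral_mono hInt1 hInt2 fun a => hpt a
    _ = (∫ x, ‖G x‖ ^ 2 ∂μ) * M := integral_mul_const M _
end

section
/- There is an absolute constant c > 0 such that: for every trigonometric polynomial p of degree at most N (N ≥ 1), the maximal function of its Fourier partial sums, S*p(x) = sup_{m≥1} |(D_m * p)(x)|, satisfies ‖S*p‖_{L¹(𝕋)} ≤ c · log(2N+1) · ‖p‖_{L¹(𝕋)}. -/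
open Real MeasureTheory

noncomputable def Dk (j : ℤ) (t : ℝ) : ℂ := ∑ l ∈ Finset.Icc (-j) j, Complex.exp (l * t * Complex.I)

lemma norm_exp_I (t : ℝ) : ‖Complex.exp (t * Complex.I)‖ = 1 := by
  simp [Complex.norm_exp]

lemma norm_exp_int_I (l : ℤ) (t : ℝ) : ‖Complex.exp (l * t * Complex.I)‖ = 1 := by
  have : ((l : ℂ) * t * Complex.I) = ((l * t : ℝ) : ℂ) * Complex.I := by push_cast; ring
  rw [this, norm_exp_I]

lemma norm_exp_sub_one (t : ℝ) : ‖Complex.exp (t * Complex.I) - 1‖ = 2 * |Real.sin (t / 2)| := by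
  have hc : Real.cos t = 1 - 2 * Real.sin (t/2) ^ 2 := by
    have h2 := Real.cos_two_mul (t/2)
    have h3 : (2:ℝ) * (t/2) = t := by ring
    rw [h3] at h2
    nlinarith [Real.sin_sq_add_cos_sq (t/2)]
  have hs : Real.sin t = 2 * Real.sin (t/2) * Real.cos (t/2) := by
    have h2 := Real.sin_two_mul (t/2)
    have h3 : (2:ℝ) * (t/2) = t := by ring
    rw [h3] at h2; exact h2
  have h : Complex.exp (t * Complex.I) - 1
      = Complex.exp ((t/2 : ℝ) * Complex.I) * (2 * (Real.sin (t/2) : ℂ) * Complex.I) := by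
    rw [Complex.exp_mul_I, Complex.exp_mul_I, ← Complex.ofReal_cos, ← Complex.ofReal_sin,
      ← Complex.ofReal_cos, ← Complex.ofReal_sin, hc, hs]
    simp only [Complex.ofReal_sub, Complex.ofReal_mul, Complex.ofReal_one, Complex.ofReal_pow,
      Complex.ofReal_ofNat]
    linear_combination (-2 * (Real.sin (t/2) : ℂ)^2) * Complex.I_sq
  rw [h, norm_mul, norm_mul, norm_mul, norm_exp_I, Complex.norm_real, Complex.norm_I]
  simp [Real.norm_eq_abs]

lemma Dk_card_bound (j : ℤ) (hj : 0 ≤ j) (t : ℝ) : ‖Dk j t‖ ≤ 2 * j + 1 := by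
  refine (norm_sum_le _ _).trans ?_
  have : ∀ l ∈ Finset.Icc (-j) j, ‖Complex.exp (l * t * Complex.I)‖ = 1 := fun l _ => norm_exp_int_I l t
  rw [Finset.sum_congr rfl this, Finset.sum_const, Int.card_Icc]
  have h0 : ((j + 1 - -j).toNat : ℤ) = 2 * j + 1 := by omega
  have h1 : ((j + 1 - -j).toNat : ℝ) = 2 * (j:ℝ) + 1 := by exact_mod_cast h0
  simp only [nsmul_eq_mul, mul_one]
  rw [h1]

lemma Dk_sin_bound (j : ℤ) (hj : 0 ≤ j) (t : ℝ) (h : Real.sin (t/2) ≠ 0) :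
    ‖Dk j t‖ ≤ 1 / |Real.sin (t / 2)| := by
  set z := Complex.exp (t * Complex.I) with hz
  have hz0 : z ≠ 0 := Complex.exp_ne_zero _
  have hzn : ‖z - 1‖ = 2 * |Real.sin (t/2)| := norm_exp_sub_one t
  have hz1 : z ≠ 1 := by
    intro hzz
    rw [hzz] at hzn
    simp at hzn
    exact h (by linarith)
  have hmap : Finset.Icc (-j) j =
      Finset.map ⟨fun i : ℕ => (i : ℤ) - j, show Function.Injective (fun i : ℕ => (i : ℤ) - j) from fun a b hab => by dsimp only at hab; omega⟩
        (Finset.range (2 * j + 1).toNat) := by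
    ext x
    simp only [Finset.mem_Icc, Finset.mem_map, Finset.mem_range, Function.Embedding.coeFn_mk]
    constructor
    · rintro ⟨h1, h2⟩
      exact ⟨(x + j).toNat, by omega, by omega⟩
    · rintro ⟨a, ha, rfl⟩
      omega
  have hDk : Dk j t = z ^ (-j) * ∑ i ∈ Finset.range (2 * j + 1).toNat, z ^ i := by
    rw [Dk, hmap, Finset.sum_map, Finset.mul_sum]
    refine Finset.sum_congr rfl fun i _ => ?_
    have h1 : ((((i:ℤ) - j : ℤ)) : ℂ) * t * Complex.I = (((i:ℤ) - j : ℤ)) * (t * Complex.I) := by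
      push_cast; ring
    rw [Function.Embedding.coeFn_mk, h1, Complex.exp_int_mul, ← hz]
    rw [zpow_sub₀ hz0, zpow_neg, zpow_natCast, div_eq_inv_mul]
  have hgeom : ∑ i ∈ Finset.range (2 * j + 1).toNat, z ^ i
      = (z ^ (2 * j + 1).toNat - 1) / (z - 1) := geom_sum_eq hz1 _
  have hnormz : ‖z‖ = 1 := norm_exp_I t
  rw [hDk, hgeom, norm_mul, norm_div]
  have h1 : ‖z ^ (-j)‖ = 1 := by rw [norm_zpow, hnormz, one_zpow]
  have h2 : ‖z ^ (2 * j + 1).toNat - 1‖ ≤ 2 := by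
    refine (norm_sub_le _ _).trans ?_
    rw [norm_pow, hnormz, one_pow, norm_one]; norm_num
  rw [h1, one_mul, hzn]
  have habs : 0 < |Real.sin (t/2)| := abs_pos.mpr h
  rw [div_le_div_iff₀ (by positivity) habs]
  calc ‖z ^ (2*j+1).toNat - 1‖ * |Real.sin (t/2)| ≤ 2 * |Real.sin (t/2)| := by
        exact mul_le_mul_of_nonneg_right h2 (abs_nonneg _)
    _ = 1 * (2 * |Real.sin (t/2)|) := by ring

lemma orth (k : ℤ) : (∫ y in (0:ℝ)..(2*π), Complex.exp (k * y * Complex.I))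
    = if k = 0 then (2*π : ℂ) else 0 := by
  split_ifs with hk
  · subst hk
    simp [two_pi_pos.le, Real.pi_nonneg]
  · have hc : (k : ℂ) * Complex.I ≠ 0 := by
      simp [Complex.ext_iff, hk]
    have h1 : ∀ y : ℝ, (k : ℂ) * y * Complex.I = (k * Complex.I) * y := fun y => by ring
    simp_rw [h1]
    rw [integral_exp_mul_complex hc]
    have h2 : (k : ℂ) * Complex.I * ((2*π : ℝ) : ℂ) = k * (2 * (π:ℝ) * Complex.I) := by
      push_cast; ring
    rw [h2, Complex.exp_int_mul_two_pi_mul_I]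
    simp

noncomputable def Sp (coef : ℤ → ℂ) (j : ℤ) (x : ℝ) : ℂ :=
  ∑ k ∈ Finset.Icc (-j) j, coef k * Complex.exp (k * x * Complex.I)

lemma conv_eq (N : ℕ) (coef : ℤ → ℂ) (x : ℝ) (j : ℤ) :
    (∫ y in (0:ℝ)..(2*π), Sp coef N y * Dk j (x - y))
      = (2*π : ℂ) * Sp coef (min j N) x := by
  have hexp : ∀ (k l : ℤ) (y : ℝ),
      coef k * Complex.exp (k * y * Complex.I) * Complex.exp (l * ((x - y : ℝ) : ℂ) * Complex.I)
        = coef k * Complex.exp (l * x * Complex.I) * Complex.exp ((k - l) * y * Complex.I) := by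
    intro k l y
    have h1 : (k:ℂ) * y * Complex.I + l * ((x - y : ℝ) : ℂ) * Complex.I
        = l * x * Complex.I + (k - l) * y * Complex.I := by push_cast; ring
    rw [mul_assoc, ← Complex.exp_add, h1, Complex.exp_add, ← mul_assoc]
  have hint : ∀ (c : ℂ), IntervalIntegrable (fun y : ℝ => Complex.exp (c * y * Complex.I))
      volume 0 (2*π) := by
    intro c
    apply Continuous.intervalIntegrable
    exact Complex.continuous_exp.comp (by fun_prop)
  have orth2 : ∀ (k l : ℤ), (∫ y in (0:ℝ)..(2*π), Complex.exp (((k:ℂ) - l) * y * Complex.I))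
      = if k = l then (2*π : ℂ) else 0 := by
    intro k l
    have hcast : ((k:ℂ) - l) = ((k - l : ℤ) : ℂ) := by push_cast; ring
    rw [hcast, orth]
    by_cases h : k = l
    · subst h; simp
    · have h2 : ¬ (k - l = 0) := by omega
      simp [h, h2]
  calc (∫ y in (0:ℝ)..(2*π), Sp coef N y * Dk j (x - y))
      = ∫ y in (0:ℝ)..(2*π), ∑ k ∈ Finset.Icc (-(N:ℤ)) N, ∑ l ∈ Finset.Icc (-j) j,
          coef k * Complex.exp (l * x * Complex.I) * Complex.exp ((k - l) * y * Complex.I) := by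
        congr 1
        ext y
        rw [Sp, Dk, Finset.sum_mul]
        refine Finset.sum_congr rfl fun k _ => ?_
        rw [Finset.mul_sum]
        exact Finset.sum_congr rfl fun l _ => hexp k l y
    _ = ∑ k ∈ Finset.Icc (-(N:ℤ)) N, ∑ l ∈ Finset.Icc (-j) j,
          coef k * Complex.exp (l * x * Complex.I) *
            ∫ y in (0:ℝ)..(2*π), Complex.exp ((k - l) * y * Complex.I) := by
        have hInt1 : ∀ k ∈ Finset.Icc (-(N:ℤ)) N, IntervalIntegrable
            (fun y : ℝ => ∑ l ∈ Finset.Icc (-j) j,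
              coef k * Complex.exp (l * x * Complex.I) *
                Complex.exp (((k:ℂ) - l) * y * Complex.I)) volume 0 (2*π) := by
          intro k _
          apply Continuous.intervalIntegrable
          exact continuous_finset_sum _ fun l _ =>
            continuous_const.mul (Complex.continuous_exp.comp (by fun_prop))
        rw [intervalIntegral.integral_finset_sum hInt1]
        refine Finset.sum_congr rfl fun k _ => ?_
        have hInt2 : ∀ l ∈ Finset.Icc (-j) j, IntervalIntegrable
            (fun y : ℝ => coef k * Complex.exp (l * x * Complex.I) *
              Complex.exp (((k:ℂ) - l) * y * Complex.I)) volume 0 (2*π) := by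
          intro l _
          apply Continuous.intervalIntegrable
          exact continuous_const.mul (Complex.continuous_exp.comp (by fun_prop))
        rw [intervalIntegral.integral_finset_sum hInt2]
        exact Finset.sum_congr rfl fun l _ => intervalIntegral.integral_const_mul _ _
    _ = ∑ k ∈ Finset.Icc (-(N:ℤ)) N, ∑ l ∈ Finset.Icc (-j) j,
          (if k = l then coef k * Complex.exp (k * x * Complex.I) * (2*π : ℂ) else 0) := by
        refine Finset.sum_congr rfl fun k _ => Finset.sum_congr rfl fun l _ => ?_
        rw [orth2]
        by_cases h : k = l
        · subst h; simp
        · simp [h]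
    _ = (2*π : ℂ) * Sp coef (min j N) x := by
        rw [Sp, Finset.mul_sum]
        have h1 : ∀ k ∈ Finset.Icc (-(N:ℤ)) N,
            (∑ l ∈ Finset.Icc (-j) j,
              (if k = l then coef k * Complex.exp (k * x * Complex.I) * (2*π : ℂ) else 0))
            = (if k ∈ Finset.Icc (-j) j then
                coef k * Complex.exp (k * x * Complex.I) * (2*π : ℂ) else 0) := by
          intro k _
          exact Finset.sum_ite_eq (Finset.Icc (-j) j) k _
        rw [Finset.sum_congr rfl h1, Finset.sum_ite_mem]
        have h2 : Finset.Icc (-(N:ℤ)) N ∩ Finset.Icc (-j) j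
            = Finset.Icc (-(min j N)) (min j N) := by
          ext a
          simp only [Finset.mem_inter, Finset.mem_Icc]
          omega
        rw [h2]
        exact Finset.sum_congr rfl fun k _ => by ring

noncomputable def Ker (N : ℕ) (t : ℝ) : ℝ := min ((2*N+1 : ℝ)) (1 / |Real.sin (t/2)|)

lemma Ker_meas (N : ℕ) : Measurable (Ker N) := by
  unfold Ker
  apply Measurable.min measurable_const
  exact (measurable_const.div ((Real.measurable_sin.comp (measurable_id.div_const 2)).abs))

lemma Ker_nonneg (N : ℕ) (t : ℝ) : 0 ≤ Ker N t := by
  apply le_min (by positivity)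
  positivity

lemma Ker_le (N : ℕ) (t : ℝ) : Ker N t ≤ 2*N+1 := min_le_left _ _

lemma Ker_periodic (N : ℕ) : Function.Periodic (Ker N) (2*π) := by
  intro t
  unfold Ker
  have : (t + 2*π)/2 = t/2 + π := by ring
  rw [this, Real.sin_add_pi, abs_neg]

lemma Dk_le_Ker (N : ℕ) (j : ℤ) (hj0 : 0 ≤ j) (hjN : j ≤ N) (t : ℝ)
    (h : Real.sin (t/2) ≠ 0) : ‖Dk j t‖ ≤ Ker N t := by
  apply le_min
  · refine (Dk_card_bound j hj0 t).trans ?_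
    have : (j : ℝ) ≤ N := by exact_mod_cast hjN
    linarith
  · exact Dk_sin_bound j hj0 t h

lemma sin_ae_ne (x : ℝ) : ∀ᵐ y : ℝ, Real.sin ((x - y)/2) ≠ 0 := by
  have hc : Set.Countable {y : ℝ | Real.sin ((x - y)/2) = 0} := by
    apply Set.Countable.mono ?_ (Set.countable_range (fun n : ℤ => x - 2*π*n))
    intro y hy
    rw [Set.mem_setOf_eq, Real.sin_eq_zero_iff] at hy
    obtain ⟨n, hn⟩ := hy
    refine ⟨n, ?_⟩
    simp only
    linarith
  rw [Filter.eventually_iff]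
  rw [mem_ae_iff]
  have : {y : ℝ | Real.sin ((x - y)/2) ≠ 0}ᶜ = {y : ℝ | Real.sin ((x - y)/2) = 0} := by
    ext y; simp
  rw [this]
  exact hc.measure_zero _

lemma intervalIntegrable_of_bdd {f : ℝ → ℝ} (hm : Measurable f) (C : ℝ)
    (h : ∀ y, |f y| ≤ C) (a b : ℝ) : IntervalIntegrable f volume a b := by
  rw [intervalIntegrable_iff]
  haveI : IsFiniteMeasure (volume.restrict (Set.uIoc a b)) := by
    constructor
    rw [Measure.restrict_apply_univ, Set.uIoc]
    exact measure_Ioc_lt_top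
  exact ⟨hm.aestronglyMeasurable.restrict,
    HasFiniteIntegral.of_bounded (C := C) (Filter.Eventually.of_forall fun y => by
      simpa [Real.norm_eq_abs] using h y)⟩

lemma Sp_continuous (coef : ℤ → ℂ) (j : ℤ) : Continuous (fun y : ℝ => Sp coef j y) :=
  continuous_finset_sum _ fun k _ =>
    continuous_const.mul (Complex.continuous_exp.comp (by fun_prop))

lemma Sp_norm_le (coef : ℤ → ℂ) (j : ℤ) (y : ℝ) :
    ‖Sp coef j y‖ ≤ ∑ k ∈ Finset.Icc (-j) j, ‖coef k‖ :=
  (norm_sum_le _ _).trans (Finset.sum_le_sum fun k _ => by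
    rw [norm_mul, norm_exp_int_I, mul_one])

lemma Sp_pointwise_bound (N : ℕ) (coef : ℤ → ℂ) (x : ℝ) (j : ℤ) (hj0 : 0 ≤ j)
    (hjN : j ≤ N) :
    ‖Sp coef j x‖ ≤ (1/(2*π)) * ∫ y in (0:ℝ)..(2*π), ‖Sp coef N y‖ * Ker N (x - y) := by
  have h2π : (0:ℝ) < 2*π := Real.two_pi_pos
  have hmin : min j (N:ℤ) = j := min_eq_left hjN
  have hconv := conv_eq N coef x j
  rw [hmin] at hconv
  set B := ∑ k ∈ Finset.Icc (-(N:ℤ)) N, ‖coef k‖ with hB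
  have hBnn : 0 ≤ B := Finset.sum_nonneg fun k _ => norm_nonneg _
  have hg_meas : Measurable (fun y : ℝ => ‖Sp coef N y‖ * Ker N (x - y)) :=
    ((Sp_continuous coef N).norm.measurable).mul
      ((Ker_meas N).comp (measurable_const.sub measurable_id))
  have hg_bdd : ∀ y : ℝ, |‖Sp coef N y‖ * Ker N (x - y)| ≤ B * (2*N+1) := by
    intro y
    rw [abs_of_nonneg (mul_nonneg (norm_nonneg _) (Ker_nonneg _ _))]
    exact mul_le_mul (Sp_norm_le coef N y) (Ker_le N _) (Ker_nonneg _ _) hBnn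
  have hg_int : IntervalIntegrable (fun y : ℝ => ‖Sp coef N y‖ * Ker N (x - y))
      volume 0 (2*π) := intervalIntegrable_of_bdd hg_meas _ hg_bdd 0 (2*π)
  have hae : ∀ᵐ y ∂(volume.restrict (Set.uIoc 0 (2*π))),
      ‖Sp coef N y * Dk j (x - y)‖ ≤ ‖Sp coef N y‖ * Ker N (x - y) := by
    have h1 : ∀ᵐ y ∂(volume.restrict (Set.uIoc 0 (2*π))), Real.sin ((x - y)/2) ≠ 0 :=
      Filter.Eventually.filter_mono (MeasureTheory.ae_mono Measure.restrict_le_self)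
        (sin_ae_ne x)
    filter_upwards [h1] with y hy
    rw [norm_mul]
    exact mul_le_mul_of_nonneg_left (Dk_le_Ker N j hj0 hjN _ hy) (norm_nonneg _)
  have hkey : ‖∫ y in (0:ℝ)..(2*π), Sp coef N y * Dk j (x - y)‖
      ≤ ∫ y in (0:ℝ)..(2*π), ‖Sp coef N y‖ * Ker N (x - y) := by
    refine (intervalIntegral.norm_integral_le_abs_of_norm_le hae hg_int).trans_eq ?_
    rw [abs_of_nonneg]
    apply intervalIntegral.integral_nonneg h2π.le
    exact fun y _ => mul_nonneg (norm_nonneg _) (Ker_nonneg _ _)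
  have hnorm2π : ‖(2*π : ℂ)‖ = 2*π := by
    simp [Real.norm_eq_abs, abs_of_nonneg Real.pi_nonneg]
  rw [hconv, norm_mul, hnorm2π] at hkey
  calc ‖Sp coef j x‖ = (1/(2*π)) * (2*π * ‖Sp coef j x‖) := by field_simp
    _ ≤ (1/(2*π)) * ∫ y in (0:ℝ)..(2*π), ‖Sp coef N y‖ * Ker N (x - y) := by
        apply mul_le_mul_of_nonneg_left hkey (by positivity)

lemma Ker_intervalIntegrable (N : ℕ) (a b : ℝ) : IntervalIntegrable (Ker N) volume a b :=
  intervalIntegrable_of_bdd (Ker_meas N) (2*N+1)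
    (fun t => by rw [abs_of_nonneg (Ker_nonneg N t)]; exact Ker_le N t) a b

lemma one_le_log (L : ℝ) (hL : 3 ≤ L) : 1 ≤ Real.log L := by
  have h1 : Real.exp 1 ≤ L := by
    have := Real.exp_one_lt_d9
    linarith
  calc (1:ℝ) = Real.log (Real.exp 1) := (Real.log_exp 1).symm
    _ ≤ Real.log L := Real.log_le_log (Real.exp_pos 1) h1

lemma Ker_integral_bound (N : ℕ) (hN : 1 ≤ N) :
    ∫ t in (0:ℝ)..(2*π), Ker N t ≤ 4*π*Real.log (2*N+1) := by
  have hπ := Real.pi_pos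
  set L : ℝ := 2*N+1 with hLdef
  have hL3 : 3 ≤ L := by
    have : (1:ℝ) ≤ N := by exact_mod_cast hN
    simp only [hLdef]; linarith
  have hL0 : 0 < L := by linarith
  set δ : ℝ := π / L with hδdef
  have hδ0 : 0 < δ := by positivity
  have hδπ : δ ≤ π / 3 := by
    rw [hδdef]
    apply div_le_div_of_nonneg_left hπ.le (by norm_num) hL3
  have hδπ' : δ < π := by nlinarith
  have hδL : δ * L = π := by rw [hδdef]; field_simp
  -- pointwise bounds
  have hbound1 : ∀ t ∈ Set.Icc δ π, Ker N t ≤ π * t⁻¹ := by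
    intro t ht
    obtain ⟨ht1, ht2⟩ := ht
    have ht0 : 0 < t := lt_of_lt_of_le hδ0 ht1
    have hsin : t / π ≤ Real.sin (t/2) := by
      have := Real.mul_le_sin (x := t/2) (by positivity) (by linarith)
      calc t / π = 2/π * (t/2) := by ring
        _ ≤ Real.sin (t/2) := this
    have hsin0 : 0 < Real.sin (t/2) := lt_of_lt_of_le (by positivity) hsin
    refine (min_le_right _ _).trans ?_
    rw [abs_of_pos hsin0, one_div]
    rw [show π * t⁻¹ = (t/π)⁻¹ by field_simp]
    exact inv_anti₀ (by positivity) hsin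
  have hbound3 : ∀ t ∈ Set.Icc π (2*π - δ), Ker N t ≤ π * (2*π - t)⁻¹ := by
    intro t ht
    obtain ⟨ht1, ht2⟩ := ht
    have ht0 : 0 < 2*π - t := by linarith
    have hsin : (2*π - t) / π ≤ Real.sin (t/2) := by
      have h1 := Real.mul_le_sin (x := π - t/2) (by linarith) (by linarith)
      calc (2*π - t) / π = 2/π * (π - t/2) := by ring
        _ ≤ Real.sin (π - t/2) := h1
        _ = Real.sin (t/2) := Real.sin_pi_sub (t/2)
    have hsin0 : 0 < Real.sin (t/2) := lt_of_lt_of_le (by positivity) hsin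
    refine (min_le_right _ _).trans ?_
    rw [abs_of_pos hsin0, one_div]
    rw [show π * (2*π - t)⁻¹ = ((2*π - t)/π)⁻¹ by field_simp]
    exact inv_anti₀ (by positivity) hsin
  -- integrability
  have hKi := Ker_intervalIntegrable N
  have hinv2 : IntervalIntegrable (fun t : ℝ => π * t⁻¹) volume δ π := by
    apply ContinuousOn.intervalIntegrable
    apply continuousOn_const.mul
    apply ContinuousOn.inv₀ continuousOn_id
    intro t ht
    rw [Set.uIcc_of_le hδπ'.le] at ht
    exact ne_of_gt (lt_of_lt_of_le hδ0 ht.1)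
  have hinv3 : IntervalIntegrable (fun t : ℝ => π * (2*π - t)⁻¹) volume π (2*π - δ) := by
    apply ContinuousOn.intervalIntegrable
    apply continuousOn_const.mul
    apply ContinuousOn.inv₀ (by fun_prop)
    intro t ht
    rw [Set.uIcc_of_le (by linarith)] at ht
    have := ht.2
    have : t ≤ 2*π - δ := this
    intro hcon
    have : t = 2*π := by linarith
    linarith [ht.2, hδ0]
  -- piece estimates
  have hp1 : ∫ t in (0:ℝ)..δ, Ker N t ≤ π := by
    calc ∫ t in (0:ℝ)..δ, Ker N t ≤ ∫ _ in (0:ℝ)..δ, L :=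
          intervalIntegral.integral_mono_on hδ0.le (hKi 0 δ)
            intervalIntegrable_const (fun t _ => Ker_le N t)
      _ = δ * L := by rw [intervalIntegral.integral_const, smul_eq_mul]; ring
      _ = π := hδL
  have hp4 : ∫ t in (2*π - δ)..(2*π), Ker N t ≤ π := by
    calc ∫ t in (2*π - δ)..(2*π), Ker N t ≤ ∫ _ in (2*π - δ)..(2*π), L :=
          intervalIntegral.integral_mono_on (by linarith) (hKi _ _)
            intervalIntegrable_const (fun t _ => Ker_le N t)
      _ = δ * L := by rw [intervalIntegral.integral_const, smul_eq_mul]; ring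
      _ = π := hδL
  have hlog : Real.log (π/δ) = Real.log L := by rw [hδdef]; congr 1; field_simp
  have hp2 : ∫ t in δ..π, Ker N t ≤ π * Real.log L := by
    calc ∫ t in δ..π, Ker N t ≤ ∫ t in δ..π, π * t⁻¹ :=
          intervalIntegral.integral_mono_on hδπ'.le (hKi _ _) hinv2 hbound1
      _ = π * ∫ t in δ..π, t⁻¹ := intervalIntegral.integral_const_mul _ _
      _ = π * Real.log (π/δ) := by rw [integral_inv_of_pos hδ0 hπ]
      _ = π * Real.log L := by rw [hlog]
  have hp3 : ∫ t in π..(2*π - δ), Ker N t ≤ π * Real.log L := by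
    calc ∫ t in π..(2*π - δ), Ker N t ≤ ∫ t in π..(2*π - δ), π * (2*π - t)⁻¹ :=
          intervalIntegral.integral_mono_on (by linarith) (hKi _ _) hinv3 hbound3
      _ = ∫ u in δ..π, π * u⁻¹ := by
          have := intervalIntegral.integral_comp_sub_left (a := π) (b := 2*π - δ)
            (fun u : ℝ => π * u⁻¹) (2*π)
          rw [this, show 2*π - (2*π - δ) = δ by ring, show 2*π - π = π by ring]
      _ = π * Real.log (π/δ) := by
          rw [intervalIntegral.integral_const_mul, integral_inv_of_pos hδ0 hπ]
      _ = π * Real.log L := by rw [hlog]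
  -- combine
  have hsplit : ∫ t in (0:ℝ)..(2*π), Ker N t
      = (∫ t in (0:ℝ)..δ, Ker N t) + (∫ t in δ..π, Ker N t)
        + (∫ t in π..(2*π - δ), Ker N t) + (∫ t in (2*π - δ)..(2*π), Ker N t) := by
    rw [intervalIntegral.integral_add_adjacent_intervals (hKi 0 δ) (hKi δ π),
      intervalIntegral.integral_add_adjacent_intervals (hKi 0 π) (hKi π (2*π - δ)),
      intervalIntegral.integral_add_adjacent_intervals (hKi 0 (2*π - δ)) (hKi (2*π - δ) (2*π))]
  have hlog1 : 1 ≤ Real.log L := one_le_log L hL3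
  rw [hsplit]
  have : π ≤ π * Real.log L := by nlinarith
  nlinarith

lemma Sp_stable (N : ℕ) (coef : ℤ → ℂ) (hvan : ∀ k : ℤ, (N : ℤ) < |k| → coef k = 0)
    (j : ℤ) (hj : (N:ℤ) ≤ j) (x : ℝ) : Sp coef j x = Sp coef N x := by
  rw [Sp, Sp]
  refine (Finset.sum_subset ?_ ?_).symm
  · intro k hk
    simp only [Finset.mem_Icc] at hk ⊢
    omega
  · intro k hk hnk
    simp only [Finset.mem_Icc] at hk hnk
    have : (N:ℤ) < |k| := by
      rcases abs_cases k with ⟨h1, h2⟩ | ⟨h1, h2⟩ <;> omega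
    rw [hvan k this, zero_mul]


/-- Lemma on Lebesgue constants: there is an absolute `c > 0` such that for every
trigonometric polynomial `p` of degree at most `N` (given by coefficients `coef`
vanishing outside `[-N, N]`), the maximal function `S*p(x) = sup_{m ≥ 1} |Dₘ * p(x)|`
of its Fourier partial sums satisfies `‖S*p‖_{L¹(𝕋)} ≤ c log(2N+1) ‖p‖_{L¹(𝕋)}`. -/
theorem stmt12 :
    ∃ c : ℝ, 0 < c ∧
      ∀ (N : ℕ) (hN : 1 ≤ N) (coef : ℤ → ℂ),
        (∀ k : ℤ, (N : ℤ) < |k| → coef k = 0) →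
        (1 / (2 * π)) * ∫ x in Set.Ioc (0:ℝ) (2 * π),
            (⨆ m : ℕ, ‖∑ k ∈ Finset.Icc (-(m + 1 : ℤ)) (m + 1 : ℤ),
              coef k * Complex.exp (k * x * Complex.I)‖)
          ≤ c * Real.log (2 * N + 1) *
              ((1 / (2 * π)) * ∫ x in Set.Ioc (0:ℝ) (2 * π),
                ‖∑ k ∈ Finset.Icc (-(N : ℤ)) (N : ℤ),
                  coef k * Complex.exp (k * x * Complex.I)‖) := by
  refine ⟨2, by norm_num, ?_⟩
  intro N hN coef hvan
  have hπ := Real.pi_pos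
  have h2π : (0:ℝ) < 2*π := Real.two_pi_pos
  set μ := volume.restrict (Set.Ioc (0:ℝ) (2*π)) with hμ
  haveI : IsFiniteMeasure μ := by
    constructor
    rw [hμ, Measure.restrict_apply_univ]
    exact measure_Ioc_lt_top
  set B : ℝ := ∑ k ∈ Finset.Icc (-(N:ℤ)) N, ‖coef k‖ with hB
  have hBnn : 0 ≤ B := Finset.sum_nonneg fun k _ => norm_nonneg _
  set Φ : ℝ × ℝ → ℝ := fun q => ‖Sp coef N q.2‖ * Ker N (q.1 - q.2) with hΦ
  have hΦm : Measurable Φ :=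
    (((Sp_continuous coef N).norm.measurable).comp measurable_snd).mul
      ((Ker_meas N).comp (measurable_fst.sub measurable_snd))
  have hΦbdd : ∀ q : ℝ × ℝ, ‖Φ q‖ ≤ B * (2*N+1) := by
    intro q
    rw [hΦ, Real.norm_eq_abs,
      abs_of_nonneg (mul_nonneg (norm_nonneg _) (Ker_nonneg _ _))]
    exact mul_le_mul (Sp_norm_le coef N q.2) (Ker_le N _) (Ker_nonneg _ _) hBnn
  have hΦint : Integrable Φ (μ.prod μ) :=
    ⟨hΦm.aestronglyMeasurable,
      HasFiniteIntegral.of_bounded (C := B * (2*N+1)) (Filter.Eventually.of_forall hΦbdd)⟩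
  -- H
  set H : ℝ → ℝ := fun x => (1/(2*π)) * ∫ y, Φ (x, y) ∂μ with hH
  have hset_eq : ∀ (f : ℝ → ℝ), (∫ y in (0:ℝ)..(2*π), f y) = ∫ y, f y ∂μ := by
    intro f
    rw [intervalIntegral.integral_of_le h2π.le, hμ]
  have hHbound : ∀ x, (⨆ m : ℕ, ‖Sp coef ((m:ℤ)+1) x‖) ≤ H x := by
    intro x
    have hH2 : H x = (1/(2*π)) * ∫ y in (0:ℝ)..(2*π), ‖Sp coef N y‖ * Ker N (x - y) := by
      rw [hH, hset_eq]
    rw [hH2]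
    apply ciSup_le
    intro m
    rcases le_or_gt ((m:ℤ)+1) N with h | h
    · exact Sp_pointwise_bound N coef x ((m:ℤ)+1) (by omega) h
    · rw [Sp_stable N coef hvan ((m:ℤ)+1) (by omega) x]
      exact Sp_pointwise_bound N coef x N (by omega) le_rfl
  have hFnn : ∀ x, 0 ≤ ⨆ m : ℕ, ‖Sp coef ((m:ℤ)+1) x‖ := fun x =>
    Real.iSup_nonneg fun m => norm_nonneg _
  have hHint : Integrable H μ := (hΦint.integral_prod_left).const_mul _
  have hmono : (∫ x, (⨆ m : ℕ, ‖Sp coef ((m:ℤ)+1) x‖) ∂μ) ≤ ∫ x, H x ∂μ :=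
    integral_mono_of_nonneg (Filter.Eventually.of_forall hFnn) hHint
      (Filter.Eventually.of_forall hHbound)
  -- compute ∫ H
  set Kint : ℝ := ∫ t in (0:ℝ)..(2*π), Ker N t with hKint
  have hKintnn : 0 ≤ Kint := by
    rw [hKint]
    exact intervalIntegral.integral_nonneg h2π.le fun t _ => Ker_nonneg N t
  have hker_shift : ∀ y : ℝ, (∫ x, Ker N (x - y) ∂μ) = Kint := by
    intro y
    rw [← hset_eq (fun x => Ker N (x - y)),
      intervalIntegral.integral_comp_sub_right (fun t => Ker N t) y]
    have hper := (Ker_periodic N).intervalIntegral_add_eq (-y) 0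
    rw [show (0:ℝ) - y = -y by ring, show 2*π - y = -y + 2*π by ring, hper, zero_add, hKint]
  have hswap : (∫ x, (∫ y, Φ (x, y) ∂μ) ∂μ) = ∫ y, (∫ x, Φ (x, y) ∂μ) ∂μ :=
    integral_integral_swap hΦint
  have hinner : ∀ y, (∫ x, Φ (x, y) ∂μ) = ‖Sp coef N y‖ * Kint := by
    intro y
    rw [hΦ]
    simp only
    rw [integral_const_mul, hker_shift y]
  have hIH : (∫ x, H x ∂μ) = (1/(2*π)) * (Kint * ∫ y, ‖Sp coef N y‖ ∂μ) := by
    rw [hH]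
    simp only
    rw [integral_const_mul, hswap]
    congr 1
    rw [show (∫ y, (∫ x, Φ (x, y) ∂μ) ∂μ) = ∫ y, ‖Sp coef N y‖ * Kint ∂μ from by
      exact integral_congr_ae (Filter.Eventually.of_forall hinner)]
    rw [show (fun y => ‖Sp coef N y‖ * Kint) = fun y => Kint * ‖Sp coef N y‖ from by
      funext y; ring]
    rw [integral_const_mul]
  have hpnn : 0 ≤ ∫ y, ‖Sp coef N y‖ ∂μ := integral_nonneg fun y => norm_nonneg _
  have hKb : Kint ≤ 4*π*Real.log (2*N+1) := Ker_integral_bound N hN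
  -- final
  have final : (1/(2*π)) * ∫ x, (⨆ m : ℕ, ‖Sp coef ((m:ℤ)+1) x‖) ∂μ
      ≤ 2 * Real.log (2*N+1) * ((1/(2*π)) * ∫ y, ‖Sp coef N y‖ ∂μ) := by
    have h1 : (1/(2*π)) * ∫ x, (⨆ m : ℕ, ‖Sp coef ((m:ℤ)+1) x‖) ∂μ
        ≤ (1/(2*π)) * ((1/(2*π)) * (Kint * ∫ y, ‖Sp coef N y‖ ∂μ)) := by
      rw [← hIH]
      exact mul_le_mul_of_nonneg_left hmono (by positivity)
    refine h1.trans ?_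
    have h2 : Kint * (∫ y, ‖Sp coef N y‖ ∂μ)
        ≤ (4*π*Real.log (2*N+1)) * ∫ y, ‖Sp coef N y‖ ∂μ :=
      mul_le_mul_of_nonneg_right hKb hpnn
    have h3 : (0:ℝ) < (1/(2*π)) * (1/(2*π)) := by positivity
    calc (1/(2*π)) * ((1/(2*π)) * (Kint * ∫ y, ‖Sp coef N y‖ ∂μ))
        ≤ (1/(2*π)) * ((1/(2*π)) * ((4*π*Real.log (2*N+1)) * ∫ y, ‖Sp coef N y‖ ∂μ)) := by
          apply mul_le_mul_of_nonneg_left _ (by positivity)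
          exact mul_le_mul_of_nonneg_left h2 (by positivity)
      _ = 2 * Real.log (2*N+1) * ((1/(2*π)) * ∫ y, ‖Sp coef N y‖ ∂μ) := by
          field_simp
          ring
  simpa [Sp, hμ] using final
end
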